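/- Completeness of the Call-by-Name unbiased strategy with respect to normal forms: if N is a β-normal λ-term and M →β* N, then M ⊳* N (where * denotes reflexive-transitive closure). -/

import Mathlib

/-- Untyped λ-terms in de Bruijn representation. -/
inductive Tm : Type
  | var : ℕ → Tm
  | lam : Tm → Tm
  | app : Tm → Tm → Tm
deriving DecidableEq

namespace Tm

/-- Lift (shift by one) the free variables of index `≥ d`. -/
def lift (d : ℕ) : Tm → Tm
  | var n => if n < d then var n else var (n + 1)
  | lam M => lam (lift (d + 1) M)
  | app M N => app (lift d M) (lift d N)

/-- Capture-avoiding substitution `M[N/k]` of `N` for the free variable `k` in `M`. -/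
def subst : Tm → ℕ → Tm → Tm
  | var n, k, N => if n = k then N else if k < n then var (n - 1) else var n
  | lam M, k, N => lam (subst M (k + 1) (lift 0 N))
  | app M₁ M₂, k, N => app (subst M₁ k N) (subst M₂ k N)

end Tm

/-- β-reduction: the closure of the root rule `(λx.M)N ↦β M[N/x]` under arbitrary contexts. -/
inductive Beta : Tm → Tm → Prop
  | beta (M N : Tm) : Beta (Tm.app (Tm.lam M) N) (M.subst 0 N)
  | lam {M M'} : Beta M M' → Beta (Tm.lam M) (Tm.lam M')
  | appL {M M' N} : Beta M M' → Beta (Tm.app M N) (Tm.app M' N)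
  | appR {M N N'} : Beta N N' → Beta (Tm.app M N) (Tm.app M N')

/-- Head reduction: the closure of `↦β` under head contexts `H ::= ⟨⟩ | λx.H | H M`. -/
inductive Head : Tm → Tm → Prop
  | beta (M N : Tm) : Head (Tm.app (Tm.lam M) N) (M.subst 0 N)
  | lam {M M'} : Head M M' → Head (Tm.lam M) (Tm.lam M')
  | appL {M M' N} : Head M M' → Head (Tm.app M N) (Tm.app M' N)

/-- The unbiased strategy `⊳`: perform head steps as long as possible; once the term has
no head redex, iterate in the subterms (in arbitrary order). -/
inductive Unb : Tm → Tm → Prop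
  | head {M M'} : Head M M' → Unb M M'
  | lam {P P'} : (∀ s, ¬ Head (Tm.lam P) s) → Unb P P' → Unb (Tm.lam P) (Tm.lam P')
  | appL {P P' Q} : (∀ s, ¬ Head (Tm.app P Q) s) → Unb P P' →
      Unb (Tm.app P Q) (Tm.app P' Q)
  | appR {P Q Q'} : (∀ s, ¬ Head (Tm.app P Q) s) → Unb Q Q' →
      Unb (Tm.app P Q) (Tm.app P Q')

/-- `M` is β-normal: it has no `→β`-successor. -/
def BetaNormal (M : Tm) : Prop := ∀ N, ¬ Beta M N

namespace Tm

theorem lift_lift (M : Tm) : ∀ {i j}, i ≤ j → lift i (lift j M) = lift (j+1) (lift i M) := by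
  induction M with
  | var n =>
    intro i j h
    simp only [lift]
    split_ifs <;> simp only [lift] <;> split_ifs <;> first | rfl | (exfalso; omega) | (simp only [var.injEq]; omega)
  | lam M ih =>
    intro i j h
    simp only [lift, lam.injEq]
    exact ih (by omega)
  | app M N ihM ihN =>
    intro i j h
    simp only [lift, app.injEq]
    exact ⟨ihM h, ihN h⟩

theorem lift_subst (M : Tm) : ∀ {d k N}, k ≤ d →
    lift d (M.subst k N) = (lift (d+1) M).subst k (lift d N) := by
  induction M with
  | var n =>
    intro d k N h
    simp only [lift, subst]
    split_ifs <;> simp only [lift, subst] <;> split_ifs <;>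
      first | rfl | (exfalso; omega) | (simp only [var.injEq]; omega)
  | lam M ih =>
    intro d k N h
    simp only [lift, subst, lam.injEq]
    rw [ih (by omega), lift_lift N (Nat.zero_le d)]
  | app M₁ M₂ ih₁ ih₂ =>
    intro d k N h
    simp only [lift, subst, app.injEq]
    exact ⟨ih₁ h, ih₂ h⟩

theorem lift_subst' (M : Tm) : ∀ {d k N}, d ≤ k →
    lift d (M.subst k N) = (lift d M).subst (k+1) (lift d N) := by
  induction M with
  | var n =>
    intro d k N h
    simp only [lift, subst]
    split_ifs <;> simp only [lift, subst] <;> split_ifs <;>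
      first | rfl | (exfalso; omega) | (simp only [var.injEq]; omega)
  | lam M ih =>
    intro d k N h
    simp only [lift, subst, lam.injEq]
    rw [ih (by omega), lift_lift N (Nat.zero_le d)]
  | app M₁ M₂ ih₁ ih₂ =>
    intro d k N h
    simp only [lift, subst, app.injEq]
    exact ⟨ih₁ h, ih₂ h⟩

theorem subst_lift (M : Tm) : ∀ d N, (lift d M).subst d N = M := by
  induction M with
  | var n =>
    intro d N
    simp only [lift, subst]
    split_ifs <;> simp only [subst] <;> split_ifs <;> first | rfl | (exfalso; omega) | (simp only [var.injEq]; omega)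
  | lam M ih =>
    intro d N
    simp only [lift, subst, lam.injEq]
    exact ih (d+1) _
  | app M₁ M₂ ih₁ ih₂ =>
    intro d N
    simp only [lift, subst, app.injEq]
    exact ⟨ih₁ d N, ih₂ d N⟩

theorem subst_subst (M : Tm) : ∀ {i k B N}, i ≤ k →
    (M.subst i B).subst k N = (M.subst (k+1) (lift i N)).subst i (B.subst k N) := by
  induction M with
  | var n =>
    intro i k B N h
    simp only [subst]
    split_ifs <;> (try simp only [subst]) <;> (try split_ifs) <;>
      first | rfl | (exfalso; omega) | (simp only [var.injEq]; omega) | (exact (subst_lift N i _).symm)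
  | lam M ih =>
    intro i k B N h
    simp only [subst, lam.injEq]
    rw [ih (by omega), lift_lift N (Nat.zero_le i), lift_subst' B (Nat.zero_le k)]
  | app M₁ M₂ ih₁ ih₂ =>
    intro i k B N h
    simp only [subst, app.injEq]
    exact ⟨ih₁ h, ih₂ h⟩

end Tm

open Tm

/-! ### Kashima-style standardization -/

/-- Weak head reduction. -/
inductive Hap : Tm → Tm → Prop
  | beta (M N : Tm) : Hap (Tm.app (Tm.lam M) N) (M.subst 0 N)
  | appL {M M' N} : Hap M M' → Hap (Tm.app M N) (Tm.app M' N)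

abbrev Haps := Relation.ReflTransGen Hap

/-- Standard reduction. -/
inductive St : Tm → Tm → Prop
  | var {M n} : Haps M (var n) → St M (var n)
  | lam {M A A'} : Haps M (lam A) → St A A' → St M (lam A')
  | app {M A B A' B'} : Haps M (app A B) → St A A' → St B B' → St M (app A' B')

theorem hap_head {M M'} (h : Hap M M') : Head M M' := by
  induction h with
  | beta M N => exact .beta M N
  | appL _ ih => exact .appL ih

theorem hap_lift {d M M'} (h : Hap M M') : Hap (lift d M) (lift d M') := by
  induction h with
  | beta A B =>
    simp only [lift]
    rw [lift_subst A (Nat.zero_le d)]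
    exact .beta _ _
  | appL _ ih => exact .appL ih

theorem hap_subst {k M M' N} (h : Hap M M') : Hap (M.subst k N) (M'.subst k N) := by
  induction h with
  | beta A B =>
    simp only [subst]
    rw [subst_subst A (Nat.zero_le k)]
    exact .beta _ _
  | appL _ ih => exact .appL ih

theorem haps_lift {d M M'} (h : Haps M M') : Haps (lift d M) (lift d M') :=
  Relation.ReflTransGen.lift (lift d) (fun _ _ h => hap_lift h) _ _ h

theorem haps_subst {k M M' N} (h : Haps M M') : Haps (M.subst k N) (M'.subst k N) :=
  Relation.ReflTransGen.lift (fun X => X.subst k N) (fun _ _ h => hap_subst h) _ _ h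

theorem haps_appL {M M' N} (h : Haps M M') : Haps (app M N) (app M' N) :=
  Relation.ReflTransGen.lift (fun X => app X N) (fun _ _ h => Hap.appL h) _ _ h

theorem st_refl (M : Tm) : St M M := by
  induction M with
  | var n => exact .var .refl
  | lam A ih => exact .lam .refl ih
  | app A B ihA ihB => exact .app .refl ihA ihB

theorem haps_st {M M' N} (h : Haps M M') (h' : St M' N) : St M N := by
  cases h' with
  | var h'' => exact .var (h.trans h'')
  | lam h'' hA => exact .lam (h.trans h'') hA
  | app h'' hA hB => exact .app (h.trans h'') hA hB

theorem st_lift {M M'} (h : St M M') : ∀ d, St (lift d M) (lift d M') := by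
  induction h with
  | @var M n hh =>
    intro d
    have h' := haps_lift (d := d) hh
    by_cases hnd : n < d <;> simp only [lift, hnd, if_true, if_false] at h' ⊢ <;> exact .var h'
  | @lam M A A' hh _ ih =>
    intro d
    exact .lam (by simpa only [lift] using haps_lift (d := d) hh) (ih (d+1))
  | @app M A B A' B' hh _ _ ihA ihB =>
    intro d
    exact .app (by simpa only [lift] using haps_lift (d := d) hh) (ihA d) (ihB d)

theorem st_subst {M M'} (h : St M M') :
    ∀ {N N' k}, St N N' → St (M.subst k N) (M'.subst k N') := by
  induction h with
  | @var M n hh =>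
    intro N N' k hN
    have h' := haps_subst (k := k) (N := N) hh
    by_cases hnk : n = k
    · subst hnk
      simp only [subst, if_pos rfl] at h' ⊢
      exact haps_st h' hN
    · simp only [subst, if_neg hnk] at h' ⊢
      by_cases hkn : k < n <;> simp only [hkn, if_true, if_false] at h' ⊢ <;> exact .var h'
  | @lam M A A' hh _ ih =>
    intro N N' k hN
    have h' := haps_subst (k := k) (N := N) hh
    simp only [subst] at h' ⊢
    exact haps_st h' (.lam .refl (ih (st_lift hN 0)))
  | @app M A B A' B' hh _ _ ihA ihB =>
    intro N N' k hN
    have h' := haps_subst (k := k) (N := N) hh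
    simp only [subst] at h' ⊢
    exact haps_st h' (.app .refl (ihA hN) (ihB hN))

theorem st_beta {M M'} (h : St M M') : ∀ {M''}, Beta M' M'' → St M M'' := by
  induction h with
  | var hh => intro M'' hb; cases hb
  | @lam M A A' hh _ ih =>
    intro M'' hb
    cases hb with
    | lam hb' => exact .lam hh (ih hb')
  | @app M A B A' B' hh hA hB ihA ihB =>
    intro M'' hb
    cases hb with
    | appL hb' => exact .app hh (ihA hb') hB
    | appR hb' => exact .app hh hA (ihB hb')
    | beta C D =>
      cases hA with
      | lam hh2 hC =>
        exact haps_st (hh.trans ((haps_appL hh2).trans (.single (.beta _ _))))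
          (st_subst hC hB)

theorem beta_st {M N} (h : Relation.ReflTransGen Beta M N) : St M N := by
  induction h with
  | refl => exact st_refl M
  | tail _ hb ih => exact st_beta ih hb

/-! ### From standard reductions to unbiased reductions -/

theorem head_beta {M M'} (h : Head M M') : Beta M M' := by
  induction h with
  | beta M N => exact .beta M N
  | lam _ ih => exact .lam ih
  | appL _ ih => exact .appL ih

theorem unb_beta {M M'} (h : Unb M M') : Beta M M' := by
  induction h with
  | head h => exact head_beta h
  | lam _ _ ih => exact .lam ih
  | appL _ _ ih => exact .appL ih
  | appR _ _ ih => exact .appR ih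

theorem haps_unb {M M'} (h : Haps M M') : Relation.ReflTransGen Unb M M' :=
  Relation.ReflTransGen.lift id (fun _ _ h => Unb.head (hap_head h)) _ _ h

theorem unb_no_head {A A'} (h : Unb A A') : Head A A' ∨ (∀ s, ¬ Head A s) := by
  cases h with
  | head h => exact .inl h
  | lam h0 h => exact .inr h0
  | appL h0 h => exact .inr h0
  | appR h0 h => exact .inr h0

theorem unb_lam {A A'} (h : Unb A A') : Unb (lam A) (lam A') := by
  rcases unb_no_head h with hh | h0
  · exact .head (.lam hh)
  · exact .lam (fun s hs => by cases hs with | lam h' => exact h0 _ h') h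

theorem unb_appL {A A' B} (h : Unb A A') (hA : ∀ C, A ≠ lam C) :
    Unb (app A B) (app A' B) := by
  rcases unb_no_head h with hh | h0
  · exact .head (.appL hh)
  · refine .appL (fun s hs => ?_) h
    cases hs with
    | beta C D => exact hA _ rfl
    | appL h' => exact h0 _ h'

theorem beta_lam_shape {A X} (h : Beta (lam A) X) : ∃ B, X = lam B := by
  cases h with | lam h => exact ⟨_, rfl⟩

theorem unb_star_lam_shape' {X Y} (h : Relation.ReflTransGen Unb X Y)
    (hX : ∃ A, X = lam A) : ∃ B, Y = lam B := by
  induction h with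
  | refl => exact hX
  | tail _ hb ih =>
    obtain ⟨A, rfl⟩ := ih
    exact beta_lam_shape (unb_beta hb)

theorem unb_star_lam_shape {A X} (h : Relation.ReflTransGen Unb (lam A) X) :
    ∃ B, X = lam B := unb_star_lam_shape' h ⟨A, rfl⟩

theorem unb_star_lam {A A'} (h : Relation.ReflTransGen Unb A A') :
    Relation.ReflTransGen Unb (lam A) (lam A') :=
  Relation.ReflTransGen.lift lam (fun _ _ h => unb_lam h) _ _ h

theorem unb_star_appL {A A' B} (h : Relation.ReflTransGen Unb A A')
    (hA' : ∀ C, A' ≠ lam C) :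
    Relation.ReflTransGen Unb (app A B) (app A' B) := by
  induction h using Relation.ReflTransGen.head_induction_on with
  | refl => exact .refl
  | @head a c hb hr ih =>
    have ha : ∀ C, a ≠ lam C := by
      rintro C rfl
      obtain ⟨D, rfl⟩ := beta_lam_shape (unb_beta hb)
      obtain ⟨E, hE⟩ := unb_star_lam_shape hr
      exact hA' E hE
    exact .head (unb_appL hb ha) ih

theorem unb_star_appR {A B B'} (hA : BetaNormal A) (hAl : ∀ C, A ≠ lam C)
    (h : Relation.ReflTransGen Unb B B') :
    Relation.ReflTransGen Unb (app A B) (app A B') := by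
  refine Relation.ReflTransGen.lift (app A) (fun _ _ h => ?_) _ _ h
  refine .appR (fun s hs => ?_) h
  cases hs with
  | beta C D => exact hAl _ rfl
  | appL h' => exact hA _ (head_beta h')

theorem bn_lam {A} (h : BetaNormal (lam A)) : BetaNormal A :=
  fun N hN => h _ (.lam hN)

theorem bn_appL {A B} (h : BetaNormal (app A B)) : BetaNormal A :=
  fun N hN => h _ (.appL hN)

theorem bn_appR {A B} (h : BetaNormal (app A B)) : BetaNormal B :=
  fun N hN => h _ (.appR hN)

theorem bn_app_not_lam {A B} (h : BetaNormal (app A B)) : ∀ C, A ≠ lam C := by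
  rintro C rfl
  exact h _ (.beta C B)

theorem st_unb {M N} (h : St M N) (hN : BetaNormal N) :
    Relation.ReflTransGen Unb M N := by
  induction h with
  | var hh => exact haps_unb hh
  | lam hh _ ih => exact (haps_unb hh).trans (unb_star_lam (ih (bn_lam hN)))
  | @app M A B A' B' hh _ _ ihA ihB =>
    refine (haps_unb hh).trans ?_
    exact (unb_star_appL (ihA (bn_appL hN)) (bn_app_not_lam hN)).trans
      (unb_star_appR (bn_appL hN) (bn_app_not_lam hN) (ihB (bn_appR hN)))


/-- **Completeness of the Call-by-Name unbiased strategy w.r.t. normal forms**: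
if `N` is β-normal and `M →β* N`, then `M ⊳* N`. -/
theorem cbn_unbiased_complete (M N : Tm) (hN : BetaNormal N)
    (h : Relation.ReflTransGen Beta M N) : Relation.ReflTransGen Unb M N :=
  st_unb (beta_st h) hN
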